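/- Define sequences by Δ_0 = Δ and Δ_{t+1} = Δ_t/2 + Δ_t^{2/3} (real-valued). Then for all t ≥ 0, Δ_t^{1/3} − 1/(2^{1/3} − 1) ≤ 2^{-t/3}·(Δ^{1/3} − 1/(2^{1/3} − 1)); in particular Δ_t^{1/3} ≤ Δ^{1/3}/2^{t/3} + 4. -/

import Mathlib

private lemma key_cube (x : ℝ) (hx : 0 < x) :
    (x / 2 + x ^ ((2:ℝ)/3)) ^ ((1:ℝ)/3) ≤ (2:ℝ) ^ (-(1:ℝ)/3) * (x ^ ((1:ℝ)/3) + 1) := by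
  set y := x ^ ((1:ℝ)/3) with hy
  have hy0 : 0 < y := Real.rpow_pos_of_pos hx _
  have hxy : x = y ^ 3 := by
    rw [hy, ← Real.rpow_natCast (x ^ ((1:ℝ)/3)) 3, ← Real.rpow_mul hx.le]
    norm_num
  have hx23 : x ^ ((2:ℝ)/3) = y ^ 2 := by
    rw [hy, ← Real.rpow_natCast (x ^ ((1:ℝ)/3)) 2, ← Real.rpow_mul hx.le]
    norm_num
  have h1 : x / 2 + x ^ ((2:ℝ)/3) ≤ (1/2) * (y + 1) ^ 3 := by
    rw [hx23, hxy]; nlinarith [hy0.le, sq_nonneg y]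
  have h2 : (x / 2 + x ^ ((2:ℝ)/3)) ^ ((1:ℝ)/3) ≤ ((1/2) * (y + 1) ^ 3) ^ ((1:ℝ)/3) := by
    apply Real.rpow_le_rpow (by positivity) h1 (by norm_num)
  refine h2.trans_eq ?_
  rw [Real.mul_rpow (by norm_num) (by positivity),
    ← Real.rpow_natCast (y+1) 3, ← Real.rpow_mul (by positivity)]
  have : ((1:ℝ)/2) ^ ((1:ℝ)/3) = (2:ℝ) ^ (-(1:ℝ)/3) := by
    rw [show (-(1:ℝ)/3) = -((1:ℝ)/3) by ring, Real.rpow_neg (by norm_num),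
      ← Real.inv_rpow (by norm_num)]
    norm_num
  rw [this]; norm_num

theorem stmt_10 (Δ : ℝ) (hΔ : 0 < Δ) (f : ℕ → ℝ)
    (h0 : f 0 = Δ)
    (hrec : ∀ t, f (t + 1) = f t / 2 + f t ^ ((2 : ℝ) / 3)) :
    ∀ t : ℕ,
      f t ^ ((1 : ℝ) / 3) - 1 / ((2 : ℝ) ^ ((1 : ℝ) / 3) - 1) ≤
        (2 : ℝ) ^ (-(t : ℝ) / 3) * (Δ ^ ((1 : ℝ) / 3) - 1 / ((2 : ℝ) ^ ((1 : ℝ) / 3) - 1)) ∧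
      f t ^ ((1 : ℝ) / 3) ≤ Δ ^ ((1 : ℝ) / 3) / (2 : ℝ) ^ ((t : ℝ) / 3) + 4 := by
  set a : ℝ := (2:ℝ) ^ ((1:ℝ)/3) with ha
  have ha1 : 1 < a := Real.one_lt_rpow_iff_of_pos (by norm_num) |>.mpr (Or.inl ⟨by norm_num, by norm_num⟩)
  have ha3 : a ^ 3 = 2 := by
    rw [ha, ← Real.rpow_natCast ((2:ℝ) ^ ((1:ℝ)/3)) 3, ← Real.rpow_mul (by norm_num)]
    norm_num
  have ha54 : (5:ℝ)/4 < a := by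
    by_contra h
    push_neg at h
    have h2 : a^2 ≤ (5/4)^2 := by nlinarith
    nlinarith [h2]
  set c : ℝ := 1 / (a - 1) with hc
  have hane : a - 1 ≠ 0 := sub_ne_zero.mpr (ne_of_gt ha1)
  have hc0 : 0 < c := by rw [hc]; apply div_pos one_pos; linarith
  have hc4 : c ≤ 4 := by
    rw [hc, div_le_iff₀ (by linarith)]; linarith
  -- identity: 2^{-1/3} * (1 + c) = c
  have hainv : (2:ℝ) ^ (-(1:ℝ)/3) = a⁻¹ := by
    rw [show (-(1:ℝ)/3) = -((1:ℝ)/3) by ring, Real.rpow_neg (by norm_num), ha]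
  have hid : (2:ℝ) ^ (-(1:ℝ)/3) * (1 + c) = c := by
    rw [hainv, hc]
    field_simp
    ring
  have hfpos : ∀ t, 0 < f t := by
    intro t
    induction t with
    | zero => rw [h0]; exact hΔ
    | succ n ih =>
        rw [hrec n]
        positivity
  have main : ∀ t : ℕ, f t ^ ((1:ℝ)/3) - c ≤ (2:ℝ) ^ (-(t:ℝ)/3) * (Δ ^ ((1:ℝ)/3) - c) := by
    intro t
    induction t with
    | zero => simp [h0]
    | succ n ih =>
        have hkey := key_cube (f n) (hfpos n)
        rw [← hrec n] at hkey
        have hstep : f (n+1) ^ ((1:ℝ)/3) - c ≤ (2:ℝ) ^ (-(1:ℝ)/3) * (f n ^ ((1:ℝ)/3) - c) := by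
          nlinarith [hid, hkey]
        have hmono : (2:ℝ) ^ (-(1:ℝ)/3) * (f n ^ ((1:ℝ)/3) - c)
            ≤ (2:ℝ) ^ (-(1:ℝ)/3) * ((2:ℝ) ^ (-(n:ℝ)/3) * (Δ ^ ((1:ℝ)/3) - c)) := by
          apply mul_le_mul_of_nonneg_left ih (by positivity)
        have hexp : (2:ℝ) ^ (-(1:ℝ)/3) * (2:ℝ) ^ (-(n:ℝ)/3) = (2:ℝ) ^ (-((n:ℕ)+1:ℝ)/3) := by
          rw [← Real.rpow_add (by norm_num)]
          ring_nf
        calc f (n+1) ^ ((1:ℝ)/3) - c ≤ _ := hstep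
          _ ≤ _ := hmono
          _ = (2:ℝ) ^ (-((n:ℕ)+1:ℝ)/3) * (Δ ^ ((1:ℝ)/3) - c) := by rw [← mul_assoc, hexp]
          _ = (2:ℝ) ^ (-((n+1:ℕ):ℝ)/3) * (Δ ^ ((1:ℝ)/3) - c) := by push_cast; ring_nf
  intro t
  refine ⟨main t, ?_⟩
  have h1 := main t
  have hle1 : (2:ℝ) ^ (-(t:ℝ)/3) ≤ 1 := by
    apply Real.rpow_le_one_of_one_le_of_nonpos (by norm_num)
    have : (0:ℝ) ≤ t := Nat.cast_nonneg t
    linarith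
  have hpos : (0:ℝ) < (2:ℝ) ^ (-(t:ℝ)/3) := by positivity
  have hΔ13 : 0 ≤ Δ ^ ((1:ℝ)/3) := by positivity
  have hdiv : (2:ℝ) ^ (-(t:ℝ)/3) * Δ ^ ((1:ℝ)/3) = Δ ^ ((1:ℝ)/3) / (2:ℝ) ^ ((t:ℝ)/3) := by
    rw [show (-(t:ℝ)/3) = -((t:ℝ)/3) by ring, Real.rpow_neg (by norm_num)]
    ring
  nlinarith [mul_nonneg hpos.le hΔ13]
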